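/- arXiv:2307.07580 — 4 statements merged into one kernel-verified Lean document; each statement's English description precedes it below -/
import Mathlib

section
/- For every u ∈ ℝ^n and integer N with 1 ≤ N ≤ n, the sum-largest function admits the linear-programming representation ψ(u, N) = min_{λ ∈ ℝ} ( N λ + Σ_{i=1}^n max(u_i − λ, 0) ), and the minimum is attained (in particular at λ equal to the N-th largest entry of u). -/
/-- The sum-largest function `ψ(u, N)`: the sum of the `N` largest entries of `u`,
i.e., the sum of the first `N` entries of `u` sorted in nonincreasing order. -/
noncomputable def sumLargest {n : ℕ} (u : Fin n → ℝ) (N : ℕ) : ℝ :=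
  (((List.ofFn u).insertionSort (· ≥ ·)).take N).sum

/-- The `N`-th largest entry of `u` (1-indexed): entry `N-1` of `u` sorted
in nonincreasing order. -/
noncomputable def nthLargest {n : ℕ} (u : Fin n → ℝ) (N : ℕ) : ℝ :=
  ((List.ofFn u).insertionSort (· ≥ ·)).getD (N - 1) 0

/-- For every `u ∈ ℝ^n` and `1 ≤ N ≤ n`, the sum-largest function has the
LP representation `ψ(u, N) = min_{λ ∈ ℝ} ( Nλ + Σ_i max(u_i − λ, 0) )`, the minimum
being attained, in particular at `λ` equal to the `N`-th largest entry of `u`. -/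
theorem sumLargest_lp_representation
    (n N : ℕ) (hN1 : 1 ≤ N) (hNn : N ≤ n) (u : Fin n → ℝ) :
    IsLeast {y : ℝ | ∃ lam : ℝ, y = N * lam + ∑ i, max (u i - lam) 0}
        (sumLargest u N) ∧
      sumLargest u N =
        N * nthLargest u N + ∑ i, max (u i - nthLargest u N) 0 := by
  classical
  set s := (List.ofFn u).insertionSort (· ≥ ·) with hs
  have hperm : s.Perm (List.ofFn u) := List.perm_insertionSort _ _
  have hsort : s.Pairwise (· ≥ ·) := List.pairwise_insertionSort _ _
  have hlen : s.length = n := by rw [hperm.length_eq, List.length_ofFn]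
  set w : Fin n → ℝ := fun i => s.get (Fin.cast hlen.symm i) with hw
  have hsw : s = List.ofFn w :=
    List.ext_get (by simp [hlen]) (fun i h1 h2 => by simp [hw])
  -- sorted as a function
  have hmono : ∀ i j : Fin n, i ≤ j → w j ≤ w i := by
    intro i j hij
    exact hsort.rel_get_of_le (a := Fin.cast hlen.symm i) (b := Fin.cast hlen.symm j) hij
  -- permutation invariance of symmetric sums
  have hsum : ∀ f : ℝ → ℝ, ∑ i, f (u i) = ∑ i, f (w i) := by
    intro f
    have h1 := (hperm.map f).sum_eq
    rw [hsw] at h1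
    simpa [List.map_ofFn, List.sum_ofFn, Function.comp] using h1.symm
  -- the index set of the N largest entries
  set F : Finset (Fin n) := Finset.univ.filter fun j : Fin n => (j : ℕ) < N with hF
  have hcard : F.card = N := by
    rw [hF]
    apply Finset.card_eq_of_bijective (fun i h => (⟨i, lt_of_lt_of_le h hNn⟩ : Fin n))
    · intro a ha
      exact ⟨a, (Finset.mem_filter.mp ha).2, rfl⟩
    · intro i h
      simp [h]
    · intro i j hi hj hij
      simpa using congrArg Fin.val hij
  have hT : sumLargest u N = ∑ j ∈ F, w j := by
    rw [sumLargest, ← hs, hsw, List.sum_take_ofFn]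
  -- the N-th largest entry
  have hN1n : N - 1 < n := lt_of_lt_of_le (Nat.sub_lt hN1 one_pos) hNn
  set kN : Fin n := ⟨N - 1, hN1n⟩ with hkN
  have hnth : nthLargest u N = w kN := by
    rw [nthLargest, ← hs, List.getD_eq_getElem _ _ (by omega : N - 1 < s.length)]
    rfl
  have hge : ∀ j ∈ F, w kN ≤ w j := by
    intro j hj
    have : (j : ℕ) < N := (Finset.mem_filter.mp hj).2
    exact hmono j kN (by simp [hkN, Fin.le_def]; omega)
  have hle : ∀ j : Fin n, j ∉ F → w j ≤ w kN := by
    intro j hj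
    have : ¬ (j : ℕ) < N := by simpa [hF] using hj
    exact hmono kN j (by simp [hkN, Fin.le_def]; omega)
  -- the value at lam = w kN
  have hval : sumLargest u N = N * w kN + ∑ i, max (w i - w kN) 0 := by
    have h1 : ∑ i, max (w i - w kN) 0 = ∑ i ∈ F, max (w i - w kN) 0 := by
      refine (Finset.sum_subset (Finset.subset_univ F) ?_).symm
      intro i _ hi
      simp [max_eq_right, sub_nonpos.mpr (hle i hi)]
    have h2 : ∑ i ∈ F, max (w i - w kN) 0 = ∑ i ∈ F, (w i - w kN) := by
      refine Finset.sum_congr rfl fun i hi => ?_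
      simp [max_eq_left, sub_nonneg.mpr (hge i hi)]
    rw [h1, h2, Finset.sum_sub_distrib, Finset.sum_const, hcard, nsmul_eq_mul, hT]
    ring
  refine ⟨⟨⟨w kN, by rw [hsum fun x => max (x - w kN) 0]; exact hval⟩, ?_⟩, ?_⟩
  · rintro y ⟨lam, rfl⟩
    rw [hsum fun x => max (x - lam) 0, hT]
    have step1 : ∑ j ∈ F, w j ≤ ∑ j ∈ F, (lam + max (w j - lam) 0) := by
      refine Finset.sum_le_sum fun j _ => ?_
      have : w j - lam ≤ max (w j - lam) 0 := le_max_left _ _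
      linarith
    have step2 : ∑ j ∈ F, (lam + max (w j - lam) 0)
        = N * lam + ∑ j ∈ F, max (w j - lam) 0 := by
      rw [Finset.sum_add_distrib, Finset.sum_const, hcard, nsmul_eq_mul]
    have step3 : ∑ j ∈ F, max (w j - lam) 0 ≤ ∑ j, max (w j - lam) 0 :=
      Finset.sum_le_sum_of_subset_of_nonneg (Finset.subset_univ F)
        (fun i _ _ => le_max_right _ _)
    calc ∑ j ∈ F, w j ≤ N * lam + ∑ j ∈ F, max (w j - lam) 0 := by
          rw [← step2]; exact step1
      _ ≤ N * lam + ∑ j, max (w j - lam) 0 := by linarith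
  · rw [hnth, hsum fun x => max (x - w kN) 0]
    exact hval
end

section
/- The continuous relaxation of the prescient problem is convex: the set of tuples (p, c, d, q, s) with (p, c, d, q) a feasible schedule, s ∈ ℝ^{L×K} with 0 ≤ s_{lk} ≤ 1 and Σ_{l=1}^L s_{lk} = 1 for each month k, and ψ(m_k, N)/N ≤ Σ_{l=1}^L T_l s_{lk} for each month k (where m_k is the vector of daily maximum grid powers of p in month k), is a convex subset of ℝ^{T−1} × ℝ^{T−1} × ℝ^{T−1} × ℝ^T × ℝ^{L×K}. -/
/-- A feasible power schedule `(p, c, d, q)` for a home energy system with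
`Tm = T − 1` time periods: power balance, storage dynamics, boundary charge
conditions `q_1 = q_T = Q/2`, and box constraints on charge, grid power, and
charging/discharging rates. -/
def FeasibleSchedule (Tm : ℕ) (l : Fin Tm → ℝ) (P Q C D ηs ηc ηd h : ℝ)
    (p c d : Fin Tm → ℝ) (q : Fin (Tm + 1) → ℝ) : Prop :=
  (∀ t, p t + d t - l t - c t = 0) ∧
  (∀ t : Fin Tm, q t.succ = ηs * q t.castSucc + h * (ηc * c t - (1 / ηd) * d t)) ∧
  q 0 = Q / 2 ∧ q (Fin.last Tm) = Q / 2 ∧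
  (∀ t, 0 ≤ q t ∧ q t ≤ Q) ∧
  (∀ t, 0 ≤ p t ∧ p t ≤ P) ∧
  (∀ t, 0 ≤ c t ∧ c t ≤ C) ∧
  (∀ t, 0 ≤ d t ∧ d t ≤ D)


/-- Preimage of a submultiset under map. -/
lemma multiset_exists_le_of_le_map {α β : Type*} [DecidableEq β] (f : α → β) :
    ∀ (s : Multiset α) (t : Multiset β), t ≤ s.map f → ∃ s' ≤ s, s'.map f = t := by
  intro s
  induction s using Multiset.induction with
  | empty => intro t ht; simp at ht; exact ⟨0, le_refl _, by simp [ht]⟩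
  | cons a s ih =>
    intro t ht
    rw [Multiset.map_cons] at ht
    by_cases hfa : f a ∈ t
    · have h1 : f a ::ₘ t.erase (f a) = t := Multiset.cons_erase hfa
      have h2 : t.erase (f a) ≤ s.map f := by
        rw [← Multiset.cons_le_cons_iff (f a), h1]; exact ht
      obtain ⟨s', hs', hmap⟩ := ih _ h2
      exact ⟨a ::ₘ s', Multiset.cons_le_cons a hs', by rw [Multiset.map_cons, hmap, h1]⟩
    · have h2 : t ≤ s.map f := (Multiset.le_cons_of_notMem hfa).mp ht
      obtain ⟨s', hs', hmap⟩ := ih _ h2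
      exact ⟨s', le_trans hs' (Multiset.le_cons_self s a), hmap⟩

/-- For a sorted (nonincreasing) list, any submultiset sum is at most the sum of the
first `card` entries. -/
lemma multiset_sum_le_take_sorted :
    ∀ (l : List ℝ), l.Pairwise (· ≥ ·) → ∀ (m : Multiset ℝ), m ≤ ↑l →
      m.sum ≤ (l.take (Multiset.card m)).sum := by
  intro l
  induction l with
  | nil =>
    intro _ m hm
    have : m = 0 := Multiset.le_zero.mp (by simpa using hm)
    simp [this]
  | cons a l ih =>
    intro hl m hm
    have hsl : l.Pairwise (· ≥ ·) := hl.of_cons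
    have hal : ∀ x ∈ l, x ≤ a := fun x hx => List.rel_of_pairwise_cons hl hx
    by_cases ham : a ∈ m
    · set m' := m.erase a with hm'
      have h1 : a ::ₘ m' = m := Multiset.cons_erase ham
      have h2 : m' ≤ ↑l := by
        rw [← Multiset.cons_le_cons_iff a, h1]
        simpa [Multiset.cons_coe] using hm
      have h3 := ih hsl m' h2
      have hcard : Multiset.card m = Multiset.card m' + 1 := by
        rw [← h1]; simp
      rw [← h1, Multiset.sum_cons]
      have : Multiset.card (a ::ₘ m') = Multiset.card m' + 1 := by simp
      rw [this]
      simpa using add_le_add_left h3 a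
    · have h2 : m ≤ ↑l := by
        have := (Multiset.le_cons_of_notMem ham (t := ↑l))
        rw [Multiset.cons_coe] at this
        exact this.mp hm
      have h3 := ih hsl m h2
      have hcard : Multiset.card m ≤ l.length := by
        simpa using Multiset.card_le_card h2
      rcases Nat.eq_zero_or_pos (Multiset.card m) with h0 | hpos
      · have : m = 0 := Multiset.card_eq_zero.mp h0
        simp [this]
      · obtain ⟨j, hj⟩ : ∃ j, Multiset.card m = j + 1 := ⟨Multiset.card m - 1, by omega⟩
        have hjlen : j < l.length := by omega
        have htake : l.take (j + 1) = l.take j ++ [l.get ⟨j, hjlen⟩] := by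
          rw [List.take_succ]
          congr 1
          simp [List.getElem?_eq_getElem hjlen]
        have hga : l.get ⟨j, hjlen⟩ ≤ a := hal _ (l.get_mem _)
        calc m.sum ≤ (l.take (Multiset.card m)).sum := h3
          _ = (l.take j).sum + l.get ⟨j, hjlen⟩ := by
              rw [hj, htake, List.sum_append]; simp
          _ ≤ a + (l.take j).sum := by linarith
          _ = (((a :: l).take (Multiset.card m))).sum := by rw [hj]; simp

lemma coe_ofFn_eq {n : ℕ} (u : Fin n → ℝ) :
    (↑(List.ofFn u) : Multiset ℝ) = Multiset.map u Finset.univ.val := by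
  rw [List.ofFn_eq_map, Fin.univ_def]
  rfl

lemma exists_finset_sumLargest {n : ℕ} (u : Fin n → ℝ) (N : ℕ) (hNn : N ≤ n) :
    ∃ S : Finset (Fin n), S.card = N ∧ ∑ i ∈ S, u i = sumLargest u N := by
  set w := (List.ofFn u).insertionSort (· ≥ ·) with hw
  have hperm : w.Perm (List.ofFn u) := List.perm_insertionSort _ _
  have hwlen : w.length = n := by rw [hperm.length_eq, List.length_ofFn]
  have hsub : (↑(w.take N) : Multiset ℝ) ≤ ↑w :=
    Multiset.coe_le.mpr (List.take_sublist N w).subperm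
  have hcoe : (↑w : Multiset ℝ) = Multiset.map u Finset.univ.val := by
    rw [Multiset.coe_eq_coe.mpr hperm, coe_ofFn_eq]
  rw [hcoe] at hsub
  obtain ⟨s', hs', hmap⟩ := multiset_exists_le_of_le_map u Finset.univ.val _ hsub
  refine ⟨⟨s', Multiset.nodup_of_le hs' Finset.univ.nodup⟩, ?_, ?_⟩
  · have : Multiset.card s' = Multiset.card (Multiset.map u s') := by simp
    rw [Finset.card_def]
    simp only [this, hmap]
    simp [hwlen, hNn]
  · rw [Finset.sum_eq_multiset_sum]
    show (Multiset.map u s').sum = _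
    rw [hmap]
    simp [sumLargest]
    rfl

lemma sum_le_sumLargest {n : ℕ} (u : Fin n → ℝ) (N : ℕ) (S : Finset (Fin n))
    (hS : S.card = N) : ∑ i ∈ S, u i ≤ sumLargest u N := by
  set w := (List.ofFn u).insertionSort (· ≥ ·) with hw
  have hperm : w.Perm (List.ofFn u) := List.perm_insertionSort _ _
  have hsorted : w.Pairwise (· ≥ ·) := List.pairwise_insertionSort _ _
  have hm : (Multiset.map u S.val) ≤ ↑w := by
    rw [Multiset.coe_eq_coe.mpr hperm, coe_ofFn_eq]
    exact Multiset.map_le_map (Finset.val_le_iff.mpr (Finset.subset_univ S))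
  have hkey := multiset_sum_le_take_sorted w hsorted _ hm
  have hcard : Multiset.card (Multiset.map u S.val) = N := by
    simp [← Finset.card_def, hS]
  rw [hcard] at hkey
  rw [Finset.sum_eq_multiset_sum]
  simpa [sumLargest] using hkey

lemma sumLargest_combo {n N : ℕ} (hNn : N ≤ n) (m0 m1 m2 : Fin n → ℝ) (a b : ℝ)
    (ha : 0 ≤ a) (hb : 0 ≤ b) (hcomb : ∀ j, m0 j ≤ a * m1 j + b * m2 j) :
    sumLargest m0 N ≤ a * sumLargest m1 N + b * sumLargest m2 N := by
  obtain ⟨S, hcard, hsum⟩ := exists_finset_sumLargest m0 N hNn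
  calc sumLargest m0 N = ∑ i ∈ S, m0 i := hsum.symm
    _ ≤ ∑ i ∈ S, (a * m1 i + b * m2 i) := Finset.sum_le_sum fun i _ => hcomb i
    _ = a * ∑ i ∈ S, m1 i + b * ∑ i ∈ S, m2 i := by
        rw [Finset.sum_add_distrib, Finset.mul_sum, Finset.mul_sum]
    _ ≤ a * sumLargest m1 N + b * sumLargest m2 N :=
        add_le_add (mul_le_mul_of_nonneg_left (sum_le_sumLargest m1 N S hcard) ha)
          (mul_le_mul_of_nonneg_left (sum_le_sumLargest m2 N S hcard) hb)

lemma combo_box {x y lo hi a b : ℝ} (hx1 : lo ≤ x) (hx2 : x ≤ hi) (hy1 : lo ≤ y) (hy2 : y ≤ hi)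
    (ha : 0 ≤ a) (hb : 0 ≤ b) (hab : a + b = 1) : lo ≤ a * x + b * y ∧ a * x + b * y ≤ hi := by
  have h1 : a * lo ≤ a * x := mul_le_mul_of_nonneg_left hx1 ha
  have h2 : b * lo ≤ b * y := mul_le_mul_of_nonneg_left hy1 hb
  have h3 : a * x ≤ a * hi := mul_le_mul_of_nonneg_left hx2 ha
  have h4 : b * y ≤ b * hi := mul_le_mul_of_nonneg_left hy2 hb
  have e1 : a * lo + b * lo = lo := by rw [← add_mul, hab, one_mul]
  have e2 : a * hi + b * hi = hi := by rw [← add_mul, hab, one_mul]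
  constructor <;> linarith


/-- The continuous relaxation of the prescient problem is convex:
the set of tuples `(p, c, d, q, s)` with `(p, c, d, q)` a feasible schedule,
`0 ≤ s_{lk} ≤ 1` with `Σ_l s_{lk} = 1` for each month `k`, and
`ψ(m_k, N)/N ≤ Σ_l T_l s_{lk}` for each month `k` (where `m_k` is the vector of
daily maximum grid powers of `p` in month `k`), is convex. -/
theorem prescient_relaxation_convex
    (Tm : ℕ) (hTm : 1 ≤ Tm) (l : Fin Tm → ℝ)
    (P Q C D : ℝ) (hP : 0 < P) (hQ : 0 < Q) (hC : 0 < C) (hD : 0 < D)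
    (ηs ηc ηd : ℝ) (hηs : ηs ∈ Set.Ioo (0 : ℝ) 1) (hηc : ηc ∈ Set.Ioo (0 : ℝ) 1)
    (hηd : ηd ∈ Set.Ioo (0 : ℝ) 1) (h : ℝ) (hh : 0 < h)
    (K : ℕ) (nk : Fin K → ℕ)
    (day : (k : Fin K) → Fin (nk k) → Finset (Fin Tm))
    (hday : ∀ k j, (day k j).Nonempty)
    (hpart : ∀ t : Fin Tm, ∃! kj : Σ k : Fin K, Fin (nk k), t ∈ day kj.1 kj.2)
    (N : ℕ) (hN1 : 1 ≤ N) (hN : ∀ k, N ≤ nk k)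
    (L : ℕ) (hL : 0 < L) (Thr : Fin L → ℝ)
    (hT0 : 0 < Thr ⟨0, hL⟩) (hTmono : StrictMono Thr) :
    Convex ℝ
      {x : (Fin Tm → ℝ) × (Fin Tm → ℝ) × (Fin Tm → ℝ) × (Fin (Tm + 1) → ℝ) ×
          (Fin L → Fin K → ℝ) |
        FeasibleSchedule Tm l P Q C D ηs ηc ηd h x.1 x.2.1 x.2.2.1 x.2.2.2.1 ∧
        (∀ lt k, 0 ≤ x.2.2.2.2 lt k ∧ x.2.2.2.2 lt k ≤ 1) ∧
        (∀ k, (∑ lt, x.2.2.2.2 lt k) = 1) ∧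
        (∀ k, sumLargest (fun j => (day k j).sup' (hday k j) x.1) N / N ≤
          ∑ lt, Thr lt * x.2.2.2.2 lt k)} := by
  rintro ⟨p1, c1, d1, q1, s1⟩ hx ⟨p2, c2, d2, q2, s2⟩ hy a b ha hb hab
  obtain ⟨⟨hbal1, hdyn1, hq01, hqT1, hqb1, hpb1, hcb1, hdb1⟩, hs1, hsum1, hpsi1⟩ := hx
  obtain ⟨⟨hbal2, hdyn2, hq02, hqT2, hqb2, hpb2, hcb2, hdb2⟩, hs2, hsum2, hpsi2⟩ := hy
  simp only [Set.mem_setOf_eq, Prod.smul_mk, Prod.mk_add_mk] at *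
  have happ : ∀ {α : Type} (f g : α → ℝ) (t : α), (a • f + b • g) t = a * f t + b * g t := by
    intro α f g t; simp [smul_eq_mul]
  refine ⟨⟨?_, ?_, ?_, ?_, ?_, ?_, ?_, ?_⟩, ?_, ?_, ?_⟩
  · intro t
    simp only [Pi.add_apply, Pi.smul_apply, smul_eq_mul]
    linear_combination a * hbal1 t + b * hbal2 t + l t * hab
  · intro t
    simp only [Pi.add_apply, Pi.smul_apply, smul_eq_mul]
    linear_combination a * hdyn1 t + b * hdyn2 t
  · simp only [Pi.add_apply, Pi.smul_apply, smul_eq_mul]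
    linear_combination a * hq01 + b * hq02 + (Q / 2) * hab
  · simp only [Pi.add_apply, Pi.smul_apply, smul_eq_mul]
    linear_combination a * hqT1 + b * hqT2 + (Q / 2) * hab
  · intro t
    simp only [Pi.add_apply, Pi.smul_apply, smul_eq_mul]
    exact combo_box (hqb1 t).1 (hqb1 t).2 (hqb2 t).1 (hqb2 t).2 ha hb hab
  · intro t
    simp only [Pi.add_apply, Pi.smul_apply, smul_eq_mul]
    exact combo_box (hpb1 t).1 (hpb1 t).2 (hpb2 t).1 (hpb2 t).2 ha hb hab
  · intro t
    simp only [Pi.add_apply, Pi.smul_apply, smul_eq_mul]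
    exact combo_box (hcb1 t).1 (hcb1 t).2 (hcb2 t).1 (hcb2 t).2 ha hb hab
  · intro t
    simp only [Pi.add_apply, Pi.smul_apply, smul_eq_mul]
    exact combo_box (hdb1 t).1 (hdb1 t).2 (hdb2 t).1 (hdb2 t).2 ha hb hab
  · intro lt k
    simp only [Pi.add_apply, Pi.smul_apply, smul_eq_mul]
    exact combo_box (hs1 lt k).1 (hs1 lt k).2 (hs2 lt k).1 (hs2 lt k).2 ha hb hab
  · intro k
    simp only [Pi.add_apply, Pi.smul_apply, smul_eq_mul]
    rw [Finset.sum_add_distrib, ← Finset.mul_sum, ← Finset.mul_sum, hsum1 k, hsum2 k]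
    simpa using hab
  · intro k
    have hcomb : ∀ j, (day k j).sup' (hday k j) (a • p1 + b • p2) ≤
        a * ((day k j).sup' (hday k j) p1) + b * ((day k j).sup' (hday k j) p2) := by
      intro j
      apply Finset.sup'_le
      intro t ht
      have h1 : p1 t ≤ (day k j).sup' (hday k j) p1 := Finset.le_sup' p1 ht
      have h2 : p2 t ≤ (day k j).sup' (hday k j) p2 := Finset.le_sup' p2 ht
      have h3 := mul_le_mul_of_nonneg_left h1 ha
      have h4 := mul_le_mul_of_nonneg_left h2 hb
      simp only [Pi.add_apply, Pi.smul_apply, smul_eq_mul]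
      linarith
    have hkey := sumLargest_combo (hN k) _ _ _ a b ha hb hcomb
    have hNpos : (0 : ℝ) < N := by exact_mod_cast Nat.lt_of_lt_of_le Nat.zero_lt_one hN1
    have hdiv := (div_le_div_iff_of_pos_right hNpos).mpr hkey
    calc sumLargest (fun j => (day k j).sup' (hday k j) (a • p1 + b • p2)) N / N
        ≤ (a * sumLargest (fun j => (day k j).sup' (hday k j) p1) N
            + b * sumLargest (fun j => (day k j).sup' (hday k j) p2) N) / N := hdiv
      _ = a * (sumLargest (fun j => (day k j).sup' (hday k j) p1) N / N)
            + b * (sumLargest (fun j => (day k j).sup' (hday k j) p2) N / N) := by ring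
      _ ≤ a * (∑ lt, Thr lt * s1 lt k) + b * (∑ lt, Thr lt * s2 lt k) :=
          add_le_add (mul_le_mul_of_nonneg_left (hpsi1 k) ha)
            (mul_le_mul_of_nonneg_left (hpsi2 k) hb)
      _ = ∑ lt, Thr lt * (a • s1 + b • s2) lt k := by
          rw [Finset.mul_sum, Finset.mul_sum, ← Finset.sum_add_distrib]
          refine Finset.sum_congr rfl fun lt _ => ?_
          simp only [Pi.add_apply, Pi.smul_apply, smul_eq_mul]
          ring
end

section
/- Assume there exists at least one feasible schedule (p, c, d, q) with z_k ≤ T_L for all months k. Then the optimal value of the prescient mixed-integer problem — minimizing h Σ_{t=1}^{T−1} λ_t p_t + Σ_{k=1}^K Σ_{l=1}^L β_l s_{lk} over feasible schedules (p,c,d,q) and binary s ∈ {0,1}^{L×K} with Σ_{l=1}^L s_{lk} = 1 and z_k ≤ Σ_{l=1}^L T_l s_{lk} for each k — equals the infimum over feasible schedules with z_k ≤ T_L for all k of the true total cost h Σ_{t=1}^{T−1} λ_t p_t + Σ_{k=1}^K φ(z_k). -/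
lemma sumLargest_nonneg {n : ℕ} (u : Fin n → ℝ) (hu : ∀ i, 0 ≤ u i) (N : ℕ) :
    0 ≤ sumLargest u N := by
  apply List.sum_nonneg
  intro x hx
  have hx' : x ∈ (List.ofFn u).insertionSort (· ≥ ·) := List.mem_of_mem_take hx
  have hx'' : x ∈ List.ofFn u := ((List.perm_insertionSort _ _).mem_iff).1 hx'
  obtain ⟨i, rfl⟩ := List.mem_ofFn.1 hx''
  exact hu i

lemma phi_spec {L : ℕ} (hL : 0 < L) (β Thr : Fin L → ℝ) (hβmono : StrictMono β)
    (hTmono : StrictMono Thr) (φ : ℝ → ℝ)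
    (hφ0 : ∀ z : ℝ, 0 ≤ z → z ≤ Thr ⟨0, hL⟩ → φ z = β ⟨0, hL⟩)
    (hφj : ∀ (j : ℕ) (hj : j + 1 < L), ∀ z : ℝ,
      Thr ⟨j, by omega⟩ < z → z ≤ Thr ⟨j + 1, hj⟩ → φ z = β ⟨j + 1, hj⟩)
    (zv : ℝ) (hz0 : 0 ≤ zv) (hzL : zv ≤ Thr ⟨L - 1, by omega⟩) :
    ∃ j : Fin L, φ zv = β j ∧ zv ≤ Thr j ∧ ∀ j' : Fin L, zv ≤ Thr j' → β j ≤ β j' := by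
  classical
  have hex : ∃ n : ℕ, ∃ hn : n < L, zv ≤ Thr ⟨n, hn⟩ := ⟨L - 1, by omega, hzL⟩
  obtain ⟨hmL, hmz⟩ := Nat.find_spec hex
  refine ⟨⟨Nat.find hex, hmL⟩, ?_, hmz, ?_⟩
  · rcases Nat.eq_zero_or_pos (Nat.find hex) with hm0 | hmpos
    · have heq : (⟨Nat.find hex, hmL⟩ : Fin L) = ⟨0, hL⟩ := Fin.ext hm0
      rw [heq] at hmz ⊢
      exact hφ0 zv hz0 hmz
    · obtain ⟨i, hi⟩ : ∃ i, Nat.find hex = i + 1 := ⟨Nat.find hex - 1, by omega⟩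
      have hiL : i + 1 < L := hi ▸ hmL
      have hmin : ¬ ∃ hn : i < L, zv ≤ Thr ⟨i, hn⟩ := Nat.find_min hex (by omega)
      push_neg at hmin
      have hlt : Thr ⟨i, by omega⟩ < zv := hmin (by omega)
      have heq : (⟨Nat.find hex, hmL⟩ : Fin L) = ⟨i + 1, hiL⟩ := Fin.ext hi
      rw [heq] at hmz ⊢
      exact hφj i hiL zv hlt hmz
  · intro j' hj'
    have : Nat.find hex ≤ j'.val := Nat.find_min' hex ⟨j'.isLt, by simpa using hj'⟩
    exact hβmono.monotone this

lemma onehot_extract {L : ℕ} (s : Fin L → ℝ) (hs : ∀ lt, s lt = 0 ∨ s lt = 1)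
    (hsum : ∑ lt, s lt = 1) : ∃ lt0, s lt0 = 1 ∧ ∀ lt, lt ≠ lt0 → s lt = 0 := by
  classical
  have hnonneg : ∀ lt, 0 ≤ s lt := by
    intro lt; rcases hs lt with h | h <;> simp [h]
  obtain ⟨lt0, hlt0⟩ : ∃ lt0, s lt0 = 1 := by
    by_contra hcon
    push_neg at hcon
    have : ∀ lt, s lt = 0 := fun lt => (hs lt).resolve_right (hcon lt)
    simp [this] at hsum
  refine ⟨lt0, hlt0, fun lt hlt => ?_⟩
  have hsub : ({lt0, lt} : Finset (Fin L)) ⊆ Finset.univ := Finset.subset_univ _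
  have hle : ∑ x ∈ ({lt0, lt} : Finset (Fin L)), s x ≤ ∑ x, s x :=
    Finset.sum_le_sum_of_subset_of_nonneg hsub (fun x _ _ => hnonneg x)
  rw [Finset.sum_pair (Ne.symm hlt), hlt0, hsum] at hle
  have : s lt ≤ 0 := by linarith
  rcases hs lt with h | h
  · exact h
  · linarith [h ▸ this]

/-- If there exists a feasible schedule with `z_k ≤ T_L` for all months
`k`, then the optimal value of the prescient mixed-integer problem (with one-hot tier
selection variables `s`) equals the infimum over feasible schedules with `z_k ≤ T_L`
for all `k` of the true total cost `h Σ_t λ_t p_t + Σ_k φ(z_k)`. -/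
theorem prescient_milp_value_eq_true_cost_inf
    (Tm : ℕ) (hTm : 1 ≤ Tm) (l lam : Fin Tm → ℝ)
    (P Q C D : ℝ) (hP : 0 < P) (hQ : 0 < Q) (hC : 0 < C) (hD : 0 < D)
    (ηs ηc ηd : ℝ) (hηs : ηs ∈ Set.Ioo (0 : ℝ) 1) (hηc : ηc ∈ Set.Ioo (0 : ℝ) 1)
    (hηd : ηd ∈ Set.Ioo (0 : ℝ) 1) (h : ℝ) (hh : 0 < h)
    (K : ℕ) (nk : Fin K → ℕ)
    (day : (k : Fin K) → Fin (nk k) → Finset (Fin Tm))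
    (hday : ∀ k j, (day k j).Nonempty)
    (hpart : ∀ t : Fin Tm, ∃! kj : Σ k : Fin K, Fin (nk k), t ∈ day kj.1 kj.2)
    (N : ℕ) (hN1 : 1 ≤ N) (hN : ∀ k, N ≤ nk k)
    (L : ℕ) (hL : 0 < L) (β Thr : Fin L → ℝ)
    (hβ0 : 0 < β ⟨0, hL⟩) (hβmono : StrictMono β)
    (hT0 : 0 < Thr ⟨0, hL⟩) (hTmono : StrictMono Thr)
    (φ : ℝ → ℝ)
    (hφ0 : ∀ z : ℝ, 0 ≤ z → z ≤ Thr ⟨0, hL⟩ → φ z = β ⟨0, hL⟩)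
    (hφj : ∀ (j : ℕ) (hj : j + 1 < L), ∀ z : ℝ,
      Thr ⟨j, by omega⟩ < z → z ≤ Thr ⟨j + 1, hj⟩ → φ z = β ⟨j + 1, hj⟩)
    -- the monthly peak usage `z_k` of a grid power profile `p`
    (z : (Fin Tm → ℝ) → Fin K → ℝ)
    (hz : ∀ p k, z p k = sumLargest (fun j => (day k j).sup' (hday k j) p) N / N)
    -- there exists a feasible schedule with `z_k ≤ T_L` for all `k`
    (hfeas : ∃ p c d q, FeasibleSchedule Tm l P Q C D ηs ηc ηd h p c d q ∧
      ∀ k, z p k ≤ Thr ⟨L - 1, by omega⟩) :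
    sInf {y : ℝ | ∃ (p c d : Fin Tm → ℝ) (q : Fin (Tm + 1) → ℝ) (s : Fin L → Fin K → ℝ),
        FeasibleSchedule Tm l P Q C D ηs ηc ηd h p c d q ∧
        (∀ lt k, s lt k = 0 ∨ s lt k = 1) ∧
        (∀ k, (∑ lt, s lt k) = 1) ∧
        (∀ k, z p k ≤ ∑ lt, Thr lt * s lt k) ∧
        y = h * ∑ t, lam t * p t + ∑ k, ∑ lt, β lt * s lt k} =
      sInf {y : ℝ | ∃ (p c d : Fin Tm → ℝ) (q : Fin (Tm + 1) → ℝ),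
        FeasibleSchedule Tm l P Q C D ηs ηc ηd h p c d q ∧
        (∀ k, z p k ≤ Thr ⟨L - 1, by omega⟩) ∧
        y = h * ∑ t, lam t * p t + ∑ k, φ (z p k)} := by
  
  classical
  set A := {y : ℝ | ∃ (p c d : Fin Tm → ℝ) (q : Fin (Tm + 1) → ℝ) (s : Fin L → Fin K → ℝ),
        FeasibleSchedule Tm l P Q C D ηs ηc ηd h p c d q ∧
        (∀ lt k, s lt k = 0 ∨ s lt k = 1) ∧
        (∀ k, (∑ lt, s lt k) = 1) ∧
        (∀ k, z p k ≤ ∑ lt, Thr lt * s lt k) ∧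
        y = h * ∑ t, lam t * p t + ∑ k, ∑ lt, β lt * s lt k} with hA
  set B := {y : ℝ | ∃ (p c d : Fin Tm → ℝ) (q : Fin (Tm + 1) → ℝ),
        FeasibleSchedule Tm l P Q C D ηs ηc ηd h p c d q ∧
        (∀ k, z p k ≤ Thr ⟨L - 1, by omega⟩) ∧
        y = h * ∑ t, lam t * p t + ∑ k, φ (z p k)} with hB
  -- nonnegativity of z for feasible schedules
  have hznn : ∀ (p : Fin Tm → ℝ), (∀ t, 0 ≤ p t) → ∀ k, 0 ≤ z p k := by
    intro p hp k
    rw [hz]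
    apply div_nonneg _ (Nat.cast_nonneg N)
    apply sumLargest_nonneg
    intro j
    obtain ⟨t, ht⟩ := hday k j
    exact le_trans (hp t) (Finset.le_sup' p ht)
  -- B ⊆ A
  have hBA : B ⊆ A := by
    intro y hy
    obtain ⟨p, c, d, q, hsched, hk, hy⟩ := hy
    have hzk : ∀ k, 0 ≤ z p k := hznn p (fun t => (hsched.2.2.2.2.2.1 t).1)
    choose j hj1 hj2 _hj3 using fun k =>
      phi_spec hL β Thr hβmono hTmono φ hφ0 hφj (z p k) (hzk k) (hk k)
    refine ⟨p, c, d, q, fun lt k => if lt = j k then 1 else 0, hsched, ?_, ?_, ?_, ?_⟩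
    · intro lt k; by_cases hlt : lt = j k <;> simp [hlt]
    · intro k; simp
    · intro k
      calc z p k ≤ Thr (j k) := hj2 k
        _ = ∑ lt, Thr lt * (if lt = j k then 1 else 0) := by
            rw [Finset.sum_eq_single (j k)] <;> simp +contextual
    · rw [hy]
      congr 1
      apply Finset.sum_congr rfl
      intro k _
      rw [hj1 k, Finset.sum_eq_single (j k)] <;> simp +contextual
  -- lower bound for A
  have hbddA : BddBelow A := by
    refine ⟨h * (∑ t, -(|lam t| * P)) + (K : ℝ) * β ⟨0, hL⟩, ?_⟩
    rintro y ⟨p, c, d, q, s, hsched, hs01, hssum, _, rfl⟩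
    have hp := hsched.2.2.2.2.2.1
    have h1 : h * (∑ t, -(|lam t| * P)) ≤ h * ∑ t, lam t * p t := by
      apply mul_le_mul_of_nonneg_left _ hh.le
      apply Finset.sum_le_sum
      intro t _
      have h2 : |lam t| * p t ≤ |lam t| * P :=
        mul_le_mul_of_nonneg_left (hp t).2 (abs_nonneg _)
      have h3 : -(lam t) * p t ≤ |lam t| * p t :=
        mul_le_mul_of_nonneg_right (neg_le_abs _) (hp t).1
      nlinarith
    have h4 : (K : ℝ) * β ⟨0, hL⟩ ≤ ∑ k, ∑ lt, β lt * s lt k := by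
      calc (K : ℝ) * β ⟨0, hL⟩ = ∑ _k : Fin K, β ⟨0, hL⟩ := by
            simp [Finset.sum_const, mul_comm]
        _ ≤ ∑ k, ∑ lt, β lt * s lt k := by
            apply Finset.sum_le_sum
            intro k _
            obtain ⟨lt0, hlt0, hrest⟩ := onehot_extract (fun lt => s lt k) (fun lt => hs01 lt k) (hssum k)
            have : ∑ lt, β lt * s lt k = β lt0 := by
              rw [Finset.sum_eq_single lt0]
              · simp [hlt0]
              · intro b _ hb; simp [hrest b hb]
              · simp
            rw [this]
            exact hβmono.monotone (Fin.mk_le_mk.mpr (Nat.zero_le _))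
    linarith
  -- for each y ∈ A there is y' ∈ B with y' ≤ y
  have hAB : ∀ y ∈ A, ∃ y' ∈ B, y' ≤ y := by
    rintro y ⟨p, c, d, q, s, hsched, hs01, hssum, hzs, rfl⟩
    have hzk : ∀ k, 0 ≤ z p k := hznn p (fun t => (hsched.2.2.2.2.2.1 t).1)
    choose lt0 hlt0 hrest using fun k =>
      onehot_extract (fun lt => s lt k) (fun lt => hs01 lt k) (hssum k)
    have hsumThr : ∀ k, (∑ lt, Thr lt * s lt k) = Thr (lt0 k) := by
      intro k
      rw [Finset.sum_eq_single (lt0 k)]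
      · simp [hlt0 k]
      · intro b _ hb; simp [hrest k b hb]
      · simp
    have hsumβ : ∀ k, (∑ lt, β lt * s lt k) = β (lt0 k) := by
      intro k
      rw [Finset.sum_eq_single (lt0 k)]
      · simp [hlt0 k]
      · intro b _ hb; simp [hrest k b hb]
      · simp
    have hzlt : ∀ k, z p k ≤ Thr (lt0 k) := fun k => (hsumThr k) ▸ hzs k
    have hkL : ∀ k, z p k ≤ Thr ⟨L - 1, by omega⟩ := by
      intro k
      refine le_trans (hzlt k) (hTmono.monotone ?_)
      exact Fin.mk_le_mk.mpr (by omega)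
    refine ⟨h * ∑ t, lam t * p t + ∑ k, φ (z p k), ⟨p, c, d, q, hsched, hkL, rfl⟩, ?_⟩
    have : ∀ k, φ (z p k) ≤ ∑ lt, β lt * s lt k := by
      intro k
      obtain ⟨j, hj1, _, hj3⟩ :=
        phi_spec hL β Thr hβmono hTmono φ hφ0 hφj (z p k) (hzk k) (hkL k)
      rw [hj1, hsumβ k]
      exact hj3 (lt0 k) (hzlt k)
    have hsum2 : ∑ k, φ (z p k) ≤ ∑ k, ∑ lt, β lt * s lt k :=
      Finset.sum_le_sum (fun k _ => this k)
    linarith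
  -- B nonempty
  obtain ⟨p0, c0, d0, q0, hs0, hk0⟩ := hfeas
  have hy0B : (h * ∑ t, lam t * p0 t + ∑ k, φ (z p0 k)) ∈ B :=
    ⟨p0, c0, d0, q0, hs0, hk0, rfl⟩
  have hBne : B.Nonempty := ⟨_, hy0B⟩
  have hAne : A.Nonempty := ⟨_, hBA hy0B⟩
  apply le_antisymm
  · exact csInf_le_csInf hbddA hBne hBA
  · apply le_csInf hAne
    intro y hy
    obtain ⟨y', hy'B, hy'le⟩ := hAB y hy
    exact le_trans (csInf_le (hbddA.mono hBA) hy'B) hy'le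
end

section
/- The epigraph of the sum-largest function has a linear-programming description: for u ∈ ℝ^n, t ∈ ℝ, and an integer N with 1 ≤ N ≤ n, one has ψ(u, N) ≤ t if and only if there exist λ ∈ ℝ and s ∈ ℝ^n with s_i ≥ 0 and s_i ≥ u_i − λ for all i, such that N λ + Σ_{i=1}^n s_i ≤ t. -/
private lemma sum_map_sub_const (l : List ℝ) (c : ℝ) :
    (l.map (fun x => x - c)).sum = l.sum - l.length * c := by
  induction l with
  | nil => simp
  | cons a l ih => simp [ih]; ring

private lemma sum_map_const_add (l : List ℝ) (c : ℝ) (f : ℝ → ℝ) :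
    (l.map (fun x => c + f x)).sum = l.length * c + (l.map f).sum := by
  induction l with
  | nil => simp
  | cons a l ih => simp [ih]; ring

/-- The epigraph of the sum-largest function has an LP description:
for `u ∈ ℝ^n`, `t ∈ ℝ`, and `1 ≤ N ≤ n`, one has `ψ(u, N) ≤ t` iff there exist
`λ ∈ ℝ` and `s ∈ ℝ^n` with `s_i ≥ 0` and `s_i ≥ u_i − λ` for all `i`, such that
`Nλ + Σ_i s_i ≤ t`. -/
theorem sumLargest_epigraph_lp
    (n N : ℕ) (hN1 : 1 ≤ N) (hNn : N ≤ n) (u : Fin n → ℝ) (t : ℝ) :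
    sumLargest u N ≤ t ↔
      ∃ (lam : ℝ) (s : Fin n → ℝ),
        (∀ i, 0 ≤ s i ∧ u i - lam ≤ s i) ∧
        N * lam + ∑ i, s i ≤ t := by
  set S : List ℝ := (List.ofFn u).insertionSort (· ≥ ·) with hS
  have hperm : S.Perm (List.ofFn u) := List.perm_insertionSort _ _
  have hsort : S.Pairwise (· ≥ ·) := List.pairwise_insertionSort _ _
  have hlen : S.length = n := by rw [hperm.length_eq, List.length_ofFn]
  have hNlen : N ≤ S.length := by omega
  -- general: sum over Fin of g ∘ u equals sum over S of g
  have hsum_eq : ∀ g : ℝ → ℝ, (S.map g).sum = ∑ i, g (u i) := by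
    intro g
    rw [(hperm.map g).sum_eq, List.map_ofFn, List.sum_ofFn]
    rfl
  -- sorted relation on getElem
  have hrel : ∀ (i j : ℕ) (hi : i < S.length) (hj : j < S.length), i ≤ j →
      S[j] ≤ S[i] := by
    intro i j hi hj hij
    exact hsort.rel_get_of_le (a := ⟨i, hi⟩) (b := ⟨j, hj⟩) hij
  have htakelen : (S.take N).length = N := by simp [hNlen]
  constructor
  · intro ht
    have hN1len : N - 1 < S.length := by omega
    set lam : ℝ := S[N-1] with hlam
    refine ⟨lam, fun i => max (u i - lam) 0, fun i => ⟨le_max_right _ _, le_max_left _ _⟩, ?_⟩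
    set f : ℝ → ℝ := fun x => max (x - lam) 0 with hf
    have hsum : ∑ i, max (u i - lam) 0 = (S.map f).sum := (hsum_eq f).symm
    rw [hsum]
    have hsplit : (S.map f).sum = ((S.take N).map f).sum + ((S.drop N).map f).sum := by
      rw [← List.sum_append, ← List.map_append, List.take_append_drop]
    have hdrop : ((S.drop N).map f).sum = 0 := by
      apply List.sum_eq_zero
      intro x hx
      rw [List.mem_map] at hx
      obtain ⟨y, hy, hxy⟩ := hx
      rw [List.mem_iff_getElem] at hy
      obtain ⟨k, hk, hyk⟩ := hy
      have hk' : N + k < S.length := by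
        have := hk; rw [List.length_drop] at this; omega
      have hy' : y = S[N + k] := by rw [← hyk, List.getElem_drop]
      have hle : y ≤ lam := by
        rw [hy', hlam]; exact hrel (N-1) (N+k) hN1len hk' (by omega)
      rw [← hxy, hf]
      simp only [max_eq_right_iff]
      linarith
    have htake : ((S.take N).map f).sum = (S.take N).sum - N * lam := by
      have : ∀ x ∈ S.take N, f x = x - lam := by
        intro x hx
        rw [List.mem_iff_getElem] at hx
        obtain ⟨k, hk, hxk⟩ := hx
        rw [htakelen] at hk
        have hk' : k < S.length := by omega
        have hx' : x = S[k] := by rw [← hxk, List.getElem_take]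
        have hge : lam ≤ x := by
          rw [hx', hlam]; exact hrel k (N-1) hk' hN1len (by omega)
        rw [hf]; simp only [max_eq_left_iff]; linarith
      rw [List.map_congr_left this, sum_map_sub_const, htakelen]
    rw [hsplit, hdrop, htake]
    have : sumLargest u N = (S.take N).sum := rfl
    linarith
  · rintro ⟨lam, s, hs, hts⟩
    set f : ℝ → ℝ := fun x => max (x - lam) 0 with hf
    have h1 : sumLargest u N ≤ N * lam + ((S.take N).map f).sum := by
      have : sumLargest u N = (S.take N).sum := rfl
      rw [this]
      have hle : ∀ x ∈ S.take N, x ≤ lam + f x := by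
        intro x _
        have : x - lam ≤ f x := le_max_left _ _
        linarith
      calc (S.take N).sum ≤ ((S.take N).map (fun x => lam + f x)).sum := by
            have h := List.sum_le_sum (l := S.take N) (f := id) (g := fun x => lam + f x) hle
            simpa using h
        _ = N * lam + ((S.take N).map f).sum := by
            rw [sum_map_const_add, htakelen]
    have h2 : ((S.take N).map f).sum ≤ (S.map f).sum := by
      have hsplit : (S.map f).sum = ((S.take N).map f).sum + ((S.drop N).map f).sum := by
        rw [← List.sum_append, ← List.map_append, List.take_append_drop]
      have hnn : 0 ≤ ((S.drop N).map f).sum := by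
        apply List.sum_nonneg
        intro x hx
        rw [List.mem_map] at hx
        obtain ⟨y, _, hxy⟩ := hx
        rw [← hxy]; exact le_max_right _ _
      linarith
    have h3 : (S.map f).sum ≤ ∑ i, s i := by
      rw [hsum_eq f]
      apply Finset.sum_le_sum
      intro i _
      exact max_le (hs i).2 (hs i).1
    linarith
end
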